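/- Constant rank of the asymmetric CP tensor factorization Jacobian: let W, X, Y be real matrices of sizes d₁×r, d₂×r, d₃×r, each of full column rank r (so r ≤ min{d₁, d₂, d₃}). Then the real-linear map Φ from triples (A, B, C) ∈ Matrix (Fin d₁) (Fin r) ℝ × Matrix (Fin d₂) (Fin r) ℝ × Matrix (Fin d₃) (Fin r) ℝ to third-order tensors (Fin d₁ → Fin d₂ → Fin d₃ → ℝ), defined entrywise by Φ(A, B, C)(i, j, k) := Σ_{ℓ ∈ Fin r} (A_{iℓ}·X_{jℓ}·Y_{kℓ} + W_{iℓ}·B_{jℓ}·Y_{kℓ} + W_{iℓ}·X_{jℓ}·C_{kℓ}), has range of dimension (d₁ + d₂ + d₃ − 2)·r. -/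

import Mathlib

open Matrix

/-- The Jacobian at `(W, X, Y)` of the asymmetric canonical polyadic map
`F(W,X,Y) = ∑ ℓ, W_ℓ ⊗ X_ℓ ⊗ Y_ℓ`, where third-order tensors are represented as functions
`Fin d₁ → Fin d₂ → Fin d₃ → ℝ`. -/
def cpAsymJacobian {d₁ d₂ d₃ r : ℕ} (W : Matrix (Fin d₁) (Fin r) ℝ)
    (X : Matrix (Fin d₂) (Fin r) ℝ) (Y : Matrix (Fin d₃) (Fin r) ℝ) :
    (Matrix (Fin d₁) (Fin r) ℝ × Matrix (Fin d₂) (Fin r) ℝ × Matrix (Fin d₃) (Fin r) ℝ)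
      →ₗ[ℝ] (Fin d₁ → Fin d₂ → Fin d₃ → ℝ) where
  toFun t := fun i j k => ∑ ℓ : Fin r,
    (t.1 i ℓ * X j ℓ * Y k ℓ + W i ℓ * t.2.1 j ℓ * Y k ℓ + W i ℓ * X j ℓ * t.2.2 k ℓ)
  map_add' t s := by
    funext i j k
    simp only [Prod.fst_add, Prod.snd_add, Matrix.add_apply, Pi.add_apply]
    rw [← Finset.sum_add_distrib]
    exact Finset.sum_congr rfl fun ℓ _ => by ring
  map_smul' c t := by
    funext i j k
    simp only [Prod.smul_fst, Prod.smul_snd, Matrix.smul_apply, Pi.smul_apply,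
      smul_eq_mul, RingHom.id_apply]
    rw [Finset.mul_sum]
    exact Finset.sum_congr rfl fun ℓ _ => by ring

namespace CPAux

lemma triple1 {α β γ : Type*} [Fintype α] [Fintype β] [Fintype γ]
    (u : α → ℝ) (v : β → ℝ) (f : γ → ℝ) (g : α → γ → ℝ) (h : β → γ → ℝ) :
    ∑ j, u j * ∑ k, v k * ∑ ℓ, f ℓ * g j ℓ * h k ℓ
      = ∑ ℓ, f ℓ * (∑ j, u j * g j ℓ) * (∑ k, v k * h k ℓ) := by
  have step : ∀ j, u j * ∑ k, v k * ∑ ℓ, f ℓ * g j ℓ * h k ℓ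
      = ∑ ℓ, (f ℓ * (u j * g j ℓ)) * (∑ k, v k * h k ℓ) := by
    intro j
    simp_rw [Finset.mul_sum]
    rw [Finset.sum_comm]
    exact Finset.sum_congr rfl fun ℓ _ => Finset.sum_congr rfl fun k _ => by ring
  simp_rw [step]
  rw [Finset.sum_comm]
  refine Finset.sum_congr rfl fun ℓ _ => ?_
  rw [Finset.mul_sum Finset.univ (fun j => u j * g j ℓ) (f ℓ), Finset.sum_mul]

lemma triple2 {α β γ : Type*} [Fintype α] [Fintype β] [Fintype γ]
    (u : α → ℝ) (v : β → ℝ) (f : γ → ℝ) (g : α → γ → ℝ) (h : β → γ → ℝ) :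
    ∑ j, u j * ∑ k, v k * ∑ ℓ, g j ℓ * f ℓ * h k ℓ
      = ∑ ℓ, f ℓ * (∑ j, u j * g j ℓ) * (∑ k, v k * h k ℓ) := by
  rw [← triple1 u v f g h]
  exact Finset.sum_congr rfl fun j _ => by
    congr 1
    exact Finset.sum_congr rfl fun k _ => by
      congr 1
      exact Finset.sum_congr rfl fun ℓ _ => by ring

lemma triple3 {α β γ : Type*} [Fintype α] [Fintype β] [Fintype γ]
    (u : α → ℝ) (v : β → ℝ) (f : γ → ℝ) (g : α → γ → ℝ) (h : β → γ → ℝ) :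
    ∑ j, u j * ∑ k, v k * ∑ ℓ, g j ℓ * h k ℓ * f ℓ
      = ∑ ℓ, f ℓ * (∑ j, u j * g j ℓ) * (∑ k, v k * h k ℓ) := by
  rw [← triple1 u v f g h]
  exact Finset.sum_congr rfl fun j _ => by
    congr 1
    exact Finset.sum_congr rfl fun k _ => by
      congr 1
      exact Finset.sum_congr rfl fun ℓ _ => by ring

/-- Existence of a left inverse for a full-column-rank matrix. -/
lemma exists_leftInv {d r : ℕ} (W : Matrix (Fin d) (Fin r) ℝ) (hW : W.rank = r) :
    ∃ W' : Matrix (Fin r) (Fin d) ℝ, W' * W = 1 := by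
  have hker : LinearMap.ker W.mulVecLin = ⊥ := by
    have h1 := LinearMap.finrank_range_add_finrank_ker W.mulVecLin
    rw [Module.finrank_pi, Fintype.card_fin] at h1
    have h2 : Module.finrank ℝ (LinearMap.range W.mulVecLin) = r := hW
    have h0 : Module.finrank ℝ (LinearMap.ker W.mulVecLin) = 0 := by omega
    exact Submodule.finrank_eq_zero.mp h0
  obtain ⟨g, hg⟩ := LinearMap.exists_leftInverse_of_injective W.mulVecLin hker
  refine ⟨LinearMap.toMatrix' g, ?_⟩
  have : LinearMap.toMatrix' g * W
      = LinearMap.toMatrix' (g.comp (Matrix.toLin' W)) := by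
    rw [LinearMap.toMatrix'_comp, LinearMap.toMatrix'_toLin']
  rw [this, Matrix.toLin'_apply', hg, LinearMap.toMatrix'_id]

variable {d₁ d₂ d₃ r : ℕ} (W : Matrix (Fin d₁) (Fin r) ℝ)
    (X : Matrix (Fin d₂) (Fin r) ℝ) (Y : Matrix (Fin d₃) (Fin r) ℝ)

/-- The parametrization of the kernel. -/
def cpParam : ((Fin r → ℝ) × (Fin r → ℝ)) →ₗ[ℝ]
    (Matrix (Fin d₁) (Fin r) ℝ × Matrix (Fin d₂) (Fin r) ℝ × Matrix (Fin d₃) (Fin r) ℝ) where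
  toFun p := (W * diagonal p.1, X * diagonal p.2, Y * diagonal (-p.1 - p.2))
  map_add' p q := by
    refine Prod.ext ?_ (Prod.ext ?_ ?_) <;>
    · ext i ℓ
      simp [Matrix.mul_diagonal, Matrix.add_apply]
      try ring
  map_smul' c p := by
    refine Prod.ext ?_ (Prod.ext ?_ ?_) <;>
    · ext i ℓ
      simp [Matrix.mul_diagonal, Matrix.smul_apply]
      try ring

variable {W X Y}

section contract

variable {A : Matrix (Fin d₁) (Fin r) ℝ} {B : Matrix (Fin d₂) (Fin r) ℝ}
    {C : Matrix (Fin d₃) (Fin r) ℝ}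
    (h : ∀ i j k, ∑ ℓ, (A i ℓ * X j ℓ * Y k ℓ + W i ℓ * B j ℓ * Y k ℓ
      + W i ℓ * X j ℓ * C k ℓ) = 0)

include h

lemma contractA {X' : Matrix (Fin r) (Fin d₂) ℝ} {Y' : Matrix (Fin r) (Fin d₃) ℝ}
    (hX' : X' * X = 1) (hY' : Y' * Y = 1) (i : Fin d₁) (m : Fin r) :
    A i m + W i m * (X' * B) m m + W i m * (Y' * C) m m = 0 := by
  have h0 : ∑ j, X' m j * ∑ k, Y' m k * ∑ ℓ, (A i ℓ * X j ℓ * Y k ℓ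
      + W i ℓ * B j ℓ * Y k ℓ + W i ℓ * X j ℓ * C k ℓ) = 0 := by
    simp [h]
  simp only [Finset.sum_add_distrib, mul_add] at h0
  erw [triple1, triple1, triple1] at h0
  simp only [← Matrix.mul_apply, hX', hY', Matrix.one_apply] at h0
  simpa using h0

lemma contractB {W' : Matrix (Fin r) (Fin d₁) ℝ} {Y' : Matrix (Fin r) (Fin d₃) ℝ}
    (hW' : W' * W = 1) (hY' : Y' * Y = 1) (j : Fin d₂) (m : Fin r) :
    X j m * (W' * A) m m + B j m + X j m * (Y' * C) m m = 0 := by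
  have h0 : ∑ i, W' m i * ∑ k, Y' m k * ∑ ℓ, (A i ℓ * X j ℓ * Y k ℓ
      + W i ℓ * B j ℓ * Y k ℓ + W i ℓ * X j ℓ * C k ℓ) = 0 := by
    simp [h]
  simp only [Finset.sum_add_distrib, mul_add] at h0
  erw [triple2, triple2, triple2] at h0
  simp only [← Matrix.mul_apply, hW', hY', Matrix.one_apply] at h0
  simpa using h0

lemma contractC {W' : Matrix (Fin r) (Fin d₁) ℝ} {X' : Matrix (Fin r) (Fin d₂) ℝ}
    (hW' : W' * W = 1) (hX' : X' * X = 1) (k : Fin d₃) (m : Fin r) :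
    Y k m * (W' * A) m m + Y k m * (X' * B) m m + C k m = 0 := by
  have h0 : ∑ i, W' m i * ∑ j, X' m j * ∑ ℓ, (A i ℓ * X j ℓ * Y k ℓ
      + W i ℓ * B j ℓ * Y k ℓ + W i ℓ * X j ℓ * C k ℓ) = 0 := by
    simp [h]
  simp only [Finset.sum_add_distrib, mul_add] at h0
  erw [triple3, triple3, triple3] at h0
  simp only [← Matrix.mul_apply, hW', hX', Matrix.one_apply] at h0
  simpa using h0

end contract

lemma ker_eq_range {W' : Matrix (Fin r) (Fin d₁) ℝ} {X' : Matrix (Fin r) (Fin d₂) ℝ}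
    {Y' : Matrix (Fin r) (Fin d₃) ℝ}
    (hW' : W' * W = 1) (hX' : X' * X = 1) (hY' : Y' * Y = 1) :
    LinearMap.ker (cpAsymJacobian W X Y) = LinearMap.range (cpParam W X Y) := by
  apply le_antisymm
  · rintro ⟨A, B, C⟩ hker
    rw [LinearMap.mem_ker] at hker
    have h : ∀ i j k, ∑ ℓ, (A i ℓ * X j ℓ * Y k ℓ + W i ℓ * B j ℓ * Y k ℓ
        + W i ℓ * X j ℓ * C k ℓ) = 0 := fun i j k =>
      congr_fun (congr_fun (congr_fun hker i) j) k
    set a : Fin r → ℝ := fun m => -(X' * B) m m - (Y' * C) m m with ha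
    set b : Fin r → ℝ := fun m => -(W' * A) m m - (Y' * C) m m with hb
    set c : Fin r → ℝ := fun m => -(W' * A) m m - (X' * B) m m with hc
    have hA : A = W * diagonal a := by
      ext i m
      rw [Matrix.mul_diagonal]
      have := contractA h hX' hY' i m
      simp only [ha]
      ring_nf
      linarith
    have hB : B = X * diagonal b := by
      ext j m
      rw [Matrix.mul_diagonal]
      have := contractB h hW' hY' j m
      simp only [hb]
      ring_nf
      linarith
    have hC : C = Y * diagonal c := by
      ext k m
      rw [Matrix.mul_diagonal]
      have := contractC h hW' hX' k m
      simp only [hc]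
      ring_nf
      linarith
    have hPa : ∀ m, (W' * A) m m = a m := by
      intro m
      rw [hA, ← Matrix.mul_assoc, hW', Matrix.one_mul, Matrix.diagonal_apply_eq]
    have hcab : c = -a - b := by
      funext m
      have h1 := hPa m
      simp only [ha, hb, hc] at h1 ⊢
      simp only [Pi.sub_apply, Pi.neg_apply]
      linarith
    refine ⟨(a, b), ?_⟩
    simp only [cpParam, LinearMap.coe_mk, AddHom.coe_mk]
    refine Prod.ext ?_ (Prod.ext ?_ ?_)
    · exact hA.symm
    · exact hB.symm
    · rw [hC, hcab]
  · rintro t ⟨⟨a, b⟩, rfl⟩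
    rw [LinearMap.mem_ker]
    funext i j k
    show ∑ ℓ, ((W * diagonal a) i ℓ * X j ℓ * Y k ℓ
      + W i ℓ * (X * diagonal b) j ℓ * Y k ℓ
      + W i ℓ * X j ℓ * (Y * diagonal (-a - b)) k ℓ) = 0
    refine Finset.sum_eq_zero fun ℓ _ => ?_
    simp only [Matrix.mul_diagonal, Pi.sub_apply, Pi.neg_apply]
    ring

lemma param_injective {W' : Matrix (Fin r) (Fin d₁) ℝ} {X' : Matrix (Fin r) (Fin d₂) ℝ}
    (hW' : W' * W = 1) (hX' : X' * X = 1) :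
    Function.Injective (cpParam W X Y (d₁ := d₁) (d₂ := d₂) (d₃ := d₃)) := by
  rw [← LinearMap.ker_eq_bot]
  rw [Submodule.eq_bot_iff]
  rintro ⟨a, b⟩ hp
  rw [LinearMap.mem_ker] at hp
  have h1 : W * diagonal a = 0 := congrArg Prod.fst hp
  have h2 : X * diagonal b = 0 := congrArg Prod.fst (congrArg Prod.snd hp)
  have ha : (diagonal a : Matrix (Fin r) (Fin r) ℝ) = 0 := by
    calc diagonal a = W' * (W * diagonal a) := by
          rw [← Matrix.mul_assoc, hW', Matrix.one_mul]
      _ = 0 := by rw [h1, Matrix.mul_zero]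
  have hb : (diagonal b : Matrix (Fin r) (Fin r) ℝ) = 0 := by
    calc diagonal b = X' * (X * diagonal b) := by
          rw [← Matrix.mul_assoc, hX', Matrix.one_mul]
      _ = 0 := by rw [h2, Matrix.mul_zero]
  have ha' : a = 0 := funext fun m => by
    have := congr_fun (congr_fun ha m) m
    simpa using this
  have hb' : b = 0 := funext fun m => by
    have := congr_fun (congr_fun hb m) m
    simpa using this
  simp [ha', hb', Prod.ext_iff]

end CPAux

open CPAux in
/-- Constant rank of the asymmetric CP tensor factorization Jacobian: if `W`, `X`, `Y` all
have full column rank `r`, then the range of the Jacobian has dimension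
`(d₁ + d₂ + d₃ − 2)·r`. -/
theorem cpAsymJacobian_rank {d₁ d₂ d₃ r : ℕ} (W : Matrix (Fin d₁) (Fin r) ℝ)
    (X : Matrix (Fin d₂) (Fin r) ℝ) (Y : Matrix (Fin d₃) (Fin r) ℝ)
    (hW : W.rank = r) (hX : X.rank = r) (hY : Y.rank = r) :
    Module.finrank ℝ (LinearMap.range (cpAsymJacobian W X Y)) = (d₁ + d₂ + d₃ - 2) * r := by
  obtain ⟨W', hW'⟩ := exists_leftInv W hW
  obtain ⟨X', hX'⟩ := exists_leftInv X hX
  obtain ⟨Y', hY'⟩ := exists_leftInv Y hY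
  have hker : Module.finrank ℝ (LinearMap.ker (cpAsymJacobian W X Y)) = r + r := by
    rw [ker_eq_range hW' hX' hY',
      LinearMap.finrank_range_of_inj (param_injective hW' hX')]
    simp [Module.finrank_prod, Module.finrank_pi]
  have hrn := LinearMap.finrank_range_add_finrank_ker (cpAsymJacobian W X Y)
  rw [hker] at hrn
  have hdom : Module.finrank ℝ
      (Matrix (Fin d₁) (Fin r) ℝ × Matrix (Fin d₂) (Fin r) ℝ × Matrix (Fin d₃) (Fin r) ℝ)
      = d₁ * r + (d₂ * r + d₃ * r) := by
    simp [Module.finrank_prod, Module.finrank_matrix]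
  rw [hdom] at hrn
  have harith : (d₁ + d₂ + d₃ - 2) * r = d₁ * r + (d₂ * r + d₃ * r) - (r + r) := by
    rw [Nat.sub_mul, Nat.add_mul, Nat.add_mul]
    omega
  rw [harith]
  omega
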